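/- For the sequence x_0 = 1, x_{k+1} = x_k * exp(sqrt(1 + 1/x_k) - 1), the reciprocal y_k = 1/x_k satisfies y_{k+1} = y_k * exp(1 - sqrt(1 + y_k)), and x_k / k → 1/2 as k → ∞. -/

import Mathlib

open Filter

theorem stmt_19 (x : ℕ → ℝ)
    (h0 : x 0 = 1)
    (hrec : ∀ k, x (k + 1) = x k * Real.exp (Real.sqrt (1 + 1 / x k) - 1)) :
    (∀ k, 1 / x (k + 1) = (1 / x k) * Real.exp (1 - Real.sqrt (1 + 1 / x k))) ∧
      Tendsto (fun k : ℕ => x k / (k : ℝ)) atTop (nhds (1 / 2)) := by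
  have hpos : ∀ k, 0 < x k := by
    intro k; induction k with
    | zero => rw [h0]; norm_num
    | succ n ih => rw [hrec]; positivity
  have hone : ∀ k, 1 ≤ x k := by
    intro k; induction k with
    | zero => rw [h0]
    | succ n ih =>
      rw [hrec]
      have hx := hpos n
      have h1 : (1:ℝ) ≤ Real.sqrt (1 + 1 / x n) :=
        Real.one_le_sqrt.2 (le_add_of_nonneg_right (by positivity))
      have h2 : (1:ℝ) ≤ Real.exp (Real.sqrt (1 + 1 / x n) - 1) :=
        Real.one_le_exp (by linarith)
      nlinarith
  -- growth: x (k+1) ≥ x k + 1/3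
  have hgrow : ∀ k, x k + 1/3 ≤ x (k+1) := by
    intro k
    set y := 1 / x k with hy
    have hxk := hpos k
    have hy0 : 0 < y := by rw [hy]; positivity
    have hy1 : y ≤ 1 := by
      rw [hy]; rw [div_le_one (hpos k)]; exact hone k
    have hsq : 1 + y/3 ≤ Real.sqrt (1 + y) := by
      apply Real.le_sqrt' (by linarith) |>.2
      nlinarith
    have hxy : x k * y = 1 := by
      rw [hy, mul_one_div, div_self (hpos k).ne']
    rw [hrec]
    have := hpos k
    nlinarith [Real.add_one_le_exp (Real.sqrt (1+y) - 1)]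
  have hlb : ∀ k : ℕ, 1 + (k:ℝ)/3 ≤ x k := by
    intro k; induction k with
    | zero => simp [h0]
    | succ n ih =>
      have := hgrow n
      push_cast
      linarith
  have hx_top : Tendsto x atTop atTop := by
    apply tendsto_atTop_mono hlb
    apply tendsto_atTop_add_const_left
    exact (tendsto_natCast_atTop_atTop (R := ℝ)).atTop_div_const (by norm_num)
  have hy_tend : Tendsto (fun k => 1 / x k) atTop (nhdsWithin 0 (Set.Ioi 0)) := by
    rw [tendsto_nhdsWithin_iff]
    constructor
    · simpa [one_div, Function.comp_def] using tendsto_inv_atTop_zero.comp hx_top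
    · exact Eventually.of_forall fun k => by
        have := hpos k; exact Set.mem_Ioi.2 (by positivity)
  -- functional limit
  have hE : Tendsto (fun y : ℝ => (Real.exp (Real.sqrt (1+y) - 1) - 1) / y)
      (nhdsWithin 0 (Set.Ioi 0)) (nhds (1/2)) := by
    have ht : Tendsto (fun y : ℝ => Real.sqrt (1+y) - 1) (nhdsWithin 0 (Set.Ioi 0))
        (nhdsWithin 0 (Set.Ioi 0)) := by
      rw [tendsto_nhdsWithin_iff]
      constructor
      · have hc : ContinuousAt (fun y : ℝ => Real.sqrt (1+y) - 1) 0 := by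
          fun_prop
        have := hc.tendsto
        simp only [Real.sqrt_one, add_zero, sub_self] at this
        exact this.mono_left nhdsWithin_le_nhds
      · filter_upwards [self_mem_nhdsWithin] with y hy
        have hy' : (0:ℝ) < y := hy
        have : (1:ℝ) < Real.sqrt (1+y) := Real.lt_sqrt (by norm_num) |>.2 (by nlinarith)
        exact Set.mem_Ioi.2 (by linarith)
    have h1 : Tendsto (fun y : ℝ => slope Real.exp 0 (Real.sqrt (1+y) - 1))
        (nhdsWithin 0 (Set.Ioi 0)) (nhds 1) := by
      have hd : Tendsto (slope Real.exp 0) (nhdsWithin 0 {0}ᶜ) (nhds 1) := by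
        have := hasDerivAt_iff_tendsto_slope.1 (Real.hasDerivAt_exp 0)
        simpa [Real.exp_zero] using this
      exact hd.comp (ht.mono_right (nhdsWithin_mono _ (fun z hz => ne_of_gt hz)))
    have h2 : Tendsto (fun y : ℝ => (Real.sqrt (1+y) - 1) / y) (nhdsWithin 0 (Set.Ioi 0))
        (nhds (1/2)) := by
      have heq : ∀ᶠ y in nhdsWithin (0:ℝ) (Set.Ioi 0),
          1 / (Real.sqrt (1+y) + 1) = (Real.sqrt (1+y) - 1) / y := by
        filter_upwards [self_mem_nhdsWithin] with y hy
        have hy' : (0:ℝ) < y := hy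
        have hs : Real.sqrt (1+y) ^ 2 = 1 + y := Real.sq_sqrt (by linarith)
        have hs0 : 0 ≤ Real.sqrt (1+y) := Real.sqrt_nonneg _
        rw [div_eq_div_iff (by positivity) (by positivity)]
        nlinarith
      rw [← tendsto_congr' heq]
      have hc : ContinuousAt (fun y : ℝ => 1 / (Real.sqrt (1+y) + 1)) 0 := by
        apply ContinuousAt.div continuousAt_const
        · fun_prop
        · norm_num [Real.sqrt_one]
      have h3 := hc.tendsto.mono_left (nhdsWithin_le_nhds (s := Set.Ioi (0:ℝ)))
      convert h3 using 2
      norm_num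
    have hmul := h1.mul h2
    rw [one_mul] at hmul
    apply hmul.congr'
    filter_upwards [self_mem_nhdsWithin] with y hy
    have hy' : (0:ℝ) < y := hy
    have ht0 : (0:ℝ) < Real.sqrt (1+y) - 1 := by
      have : (1:ℝ) < Real.sqrt (1+y) := Real.lt_sqrt (by norm_num) |>.2 (by nlinarith)
      linarith
    rw [slope_def_field]
    rw [Real.exp_zero]
    field_simp
    rw [sub_zero, mul_div_cancel_left₀ _ ht0.ne']
  -- differences tend to 1/2
  have hF : Tendsto (fun k => x (k+1) - x k) atTop (nhds (1/2)) := by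
    have := hE.comp hy_tend
    apply this.congr
    intro k
    simp only [Function.comp]
    have hx := (hpos k).ne'
    rw [hrec k]
    field_simp
    try ring
  -- Cesàro
  have hce := hF.cesaro
  have hsum : ∀ n, ∑ i ∈ Finset.range n, (x (i+1) - x i) = x n - 1 := by
    intro n
    rw [Finset.sum_range_sub x n, h0]
  simp only [hsum] at hce
  have h1n : Tendsto (fun n : ℕ => ((n:ℝ))⁻¹) atTop (nhds 0) :=
    tendsto_inv_atTop_zero.comp tendsto_natCast_atTop_atTop
  have hadd := hce.add h1n
  rw [add_zero] at hadd
  constructor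
  · intro k
    rw [hrec k, show 1 - Real.sqrt (1 + 1 / x k) = -(Real.sqrt (1 + 1 / x k) - 1) by ring,
      Real.exp_neg]
    have hx := (hpos k).ne'
    have he := (Real.exp_pos (Real.sqrt (1 + 1 / x k) - 1)).ne'
    field_simp
  · apply hadd.congr'
    filter_upwards [eventually_ge_atTop 1] with n hn
    have hn0 : (n:ℝ) ≠ 0 := Nat.cast_ne_zero.2 (by omega)
    field_simp
    try ring
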